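/- Let H be obtained from a graph G with vertex set {v_1,…,v_k} by expanding each vertex v_i by a module M_i = (V_i, E_i). Let S be a minimal separator of H and suppose some V_i intersects S but is not contained in S. Then V_i intersects every full component of H − S associated to S; in particular, S ∩ V_i is a minimal separator of M_i and S \ V_i = N_H(V_i). -/

import Mathlib

open SimpleGraph

universe u

/-- Reachability in `G − S`: there is a walk whose support avoids `S`. -/
def AvoidReach {V : Type u} (G : SimpleGraph V) (S : Set V) (u v : V) : Prop :=
  ∃ w : G.Walk u v, ∀ x ∈ w.support, x ∉ S

/-- `S` is a `u,v`-separator of `G`: `u, v ∉ S` and `u,v` lie in different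
connected components of `G − S`. -/
def IsSep {V : Type u} (G : SimpleGraph V) (S : Set V) (u v : V) : Prop :=
  u ∉ S ∧ v ∉ S ∧ ¬ AvoidReach G S u v

/-- `S` is a minimal `u,v`-separator of `G`. -/
def IsMinSep {V : Type u} (G : SimpleGraph V) (S : Set V) (u v : V) : Prop :=
  IsSep G S u v ∧ ∀ T ⊂ S, ¬ IsSep G T u v

/-- `S` is a minimal separator of `G`. -/
def IsMinimalSeparator {V : Type u} (G : SimpleGraph V) (S : Set V) : Prop :=
  ∃ u v, IsMinSep G S u v

/-- `C` is a connected component of `G − S`. -/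
def IsCompOf {V : Type u} (G : SimpleGraph V) (S C : Set V) : Prop :=
  ∃ v, v ∉ S ∧ C = {x | AvoidReach G S v x}

/-- The neighbourhood of a vertex set `A`: vertices outside `A` with a neighbour in `A`. -/
def setNbhd {V : Type u} (G : SimpleGraph V) (A : Set V) : Set V :=
  {x | x ∉ A ∧ ∃ a ∈ A, G.Adj x a}

/-- `C` is a full component of `G − S` associated to `S`, i.e. `N(C) = S`. -/
def IsFullCompOf {V : Type u} (G : SimpleGraph V) (S C : Set V) : Prop :=
  IsCompOf G S C ∧ setNbhd G C = S

/-- `W` is a vertex cover of `G`. -/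
def IsVC {V : Type u} (G : SimpleGraph V) (W : Set V) : Prop :=
  ∀ ⦃a b⦄, G.Adj a b → a ∈ W ∨ b ∈ W

/-- The vertex cover number `vc(G)`. -/
noncomputable def vcNum {V : Type u} (G : SimpleGraph V) : ℕ :=
  sInf {n | ∃ W : Set V, IsVC G W ∧ W.ncard = n}

/-- A graph is chordal if every cycle on four or more vertices has a chord, i.e. an
edge of the graph between two vertices of the cycle that is not an edge of the cycle. -/
def IsChordalG {V : Type u} (G : SimpleGraph V) : Prop :=
  ∀ (v : V) (w : G.Walk v v), w.IsCycle → 4 ≤ w.length →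
    ∃ x ∈ w.support, ∃ y ∈ w.support, G.Adj x y ∧ s(x, y) ∉ w.edges

/-- `H` is a minimal triangulation of `G`: a chordal supergraph of `G` such that no graph
strictly between `G` and `H` is chordal. -/
def IsMinimalTriangulation {V : Type u} (G H : SimpleGraph V) : Prop :=
  G ≤ H ∧ IsChordalG H ∧ ∀ F : SimpleGraph V, G ≤ F → F < H → ¬ IsChordalG F

/-- `Ω` is a maximal clique of `H`. -/
def IsMaxClique {V : Type u} (H : SimpleGraph V) (Ω : Set V) : Prop :=
  H.IsClique Ω ∧ ∀ t : Set V, H.IsClique t → Ω ⊆ t → t = Ω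

/-- `Ω` is a potential maximal clique of `G`: a maximal clique of some
minimal triangulation of `G`. -/
def IsPMC {V : Type u} (G : SimpleGraph V) (Ω : Set V) : Prop :=
  ∃ H : SimpleGraph V, IsMinimalTriangulation G H ∧ IsMaxClique H Ω

/-- The graph `H` obtained from `G` (with vertex set `{v_1, …, v_k} = Fin k`) by expanding
each vertex `i` by the module `M i`: the vertex set is the disjoint union `Σ i, V i`;
within each `V i` the edges are those of `M i`, and `a ∈ V i` is adjacent to `b ∈ V j`
(`i ≠ j`) iff `i` and `j` are adjacent in `G`. -/
def expandG {k : ℕ} {V : Fin k → Type u} (G : SimpleGraph (Fin k))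
    (M : ∀ i, SimpleGraph (V i)) : SimpleGraph (Σ i, V i) :=
  SimpleGraph.fromRel (fun a b =>
    (∃ h : a.1 = b.1, (M b.1).Adj (h ▸ a.2) b.2) ∨ (a.1 ≠ b.1 ∧ G.Adj a.1 b.1))

/-- The set of vertices of the expanded graph coming from the module `M i`,
i.e. the copy of `V i`. -/
def modSet {k : ℕ} {V : Fin k → Type u} (i : Fin k) : Set (Σ i, V i) := {x | x.1 = i}

/-! ### Auxiliary lemmas -/

lemma AR.refl {W : Type u} (Gr : SimpleGraph W) {S : Set W} {a : W} (ha : a ∉ S) :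
    AvoidReach Gr S a a := ⟨Walk.nil, by simp [ha]⟩

lemma AR.symm {W : Type u} {Gr : SimpleGraph W} {S : Set W} {a b : W}
    (h : AvoidReach Gr S a b) : AvoidReach Gr S b a := by
  obtain ⟨w, hw⟩ := h
  exact ⟨w.reverse, by simpa using hw⟩

lemma AR.trans {W : Type u} {Gr : SimpleGraph W} {S : Set W} {a b c : W}
    (h1 : AvoidReach Gr S a b) (h2 : AvoidReach Gr S b c) : AvoidReach Gr S a c := by
  obtain ⟨w1, hw1⟩ := h1; obtain ⟨w2, hw2⟩ := h2
  refine ⟨w1.append w2, fun x hx => ?_⟩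
  rcases (Walk.mem_support_append_iff _ _).1 hx with h | h
  exacts [hw1 x h, hw2 x h]

lemma AR.of_adj {W : Type u} {Gr : SimpleGraph W} {S : Set W} {a b : W}
    (h : Gr.Adj a b) (ha : a ∉ S) (hb : b ∉ S) : AvoidReach Gr S a b :=
  ⟨h.toWalk, by simp [ha, hb]⟩

lemma AR.left {W : Type u} {Gr : SimpleGraph W} {S : Set W} {a b : W}
    (h : AvoidReach Gr S a b) : a ∉ S := by
  obtain ⟨w, hw⟩ := h; exact hw a w.start_mem_support

lemma AR.right {W : Type u} {Gr : SimpleGraph W} {S : Set W} {a b : W}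
    (h : AvoidReach Gr S a b) : b ∉ S := by
  obtain ⟨w, hw⟩ := h; exact hw b w.end_mem_support

lemma AR.mono {W : Type u} {Gr : SimpleGraph W} {S T : Set W} (hTS : T ⊆ S) {a b : W}
    (h : AvoidReach Gr S a b) : AvoidReach Gr T a b := by
  obtain ⟨w, hw⟩ := h; exact ⟨w, fun x hx hxT => hw x hx (hTS hxT)⟩

/-- Boundary extraction: if a walk starting outside `S` meets `S`, then there is a vertex
`c` reachable from the start avoiding `S` that is adjacent to a vertex `s` of `S` on the
walk. -/
lemma AR.boundary {W : Type u} {Gr : SimpleGraph W} {S : Set W} :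
    ∀ {a b : W} (w : Gr.Walk a b), a ∉ S → (∃ z ∈ w.support, z ∈ S) →
    ∃ c s, AvoidReach Gr S a c ∧ s ∈ S ∧ s ∈ w.support ∧ Gr.Adj c s := by
  intro a b w
  induction w with
  | nil => intro ha ⟨z, hz, hzS⟩; simp at hz; subst hz; exact absurd hzS ha
  | @cons a y b h w ih =>
    intro ha hz
    by_cases hy : y ∈ S
    · exact ⟨a, y, AR.refl Gr ha, hy, by simp, h⟩
    · obtain ⟨z, hzsupp, hzS⟩ := hz
      have hz2 : z = a ∨ z ∈ w.support := by simpa using hzsupp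
      have hz' : z ∈ w.support := by
        rcases hz2 with rfl | hmem
        · exact absurd hzS ha
        · exact hmem
      obtain ⟨c, s, hAR, hsS, hssupp, hadj⟩ := ih hy ⟨z, hz', hzS⟩
      exact ⟨c, s, AR.trans (AR.of_adj h ha hy) hAR, hsS, by simp [hssupp], hadj⟩

/-- Purging: given a "bridge" around `s0`, a walk whose support meets `S` only in `s0`
can be replaced by a walk avoiding `S` entirely. -/
lemma AR.purge {W : Type u} {Gr : SimpleGraph W} {S : Set W} (s0 : W)
    (hbr : ∀ c d, Gr.Adj c s0 → Gr.Adj d s0 → c ∉ S → d ∉ S → AvoidReach Gr S c d) :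
    ∀ (n : ℕ) {a b : W} (w : Gr.Walk a b), w.length ≤ n → a ∉ S → b ∉ S →
      (∀ z ∈ w.support, z ∈ S → z = s0) → AvoidReach Gr S a b := by
  intro n
  induction n with
  | zero =>
    intro a b w hlen ha _ _
    cases w with
    | nil => exact AR.refl Gr ha
    | cons h w => simp [Walk.length_cons] at hlen
  | succ n ih =>
    intro a b w hlen ha hb hsupp
    cases w with
    | nil => exact AR.refl Gr ha
    | @cons _ y _ h w' =>
      by_cases hy : y ∈ S
      · have hy0 : y = s0 := hsupp y (by simp) hy
        subst hy0
        cases w' with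
        | nil => exact absurd hy hb
        | @cons _ y' _ h2 w'' =>
          have hy' : y' ∉ S := by
            intro hy'S
            have : y' = y := hsupp y' (by simp) hy'S
            exact Gr.loopless.irrefl y (this ▸ h2)
          have hlen'' : w''.length ≤ n := by
            simp [Walk.length_cons] at hlen; omega
          refine AR.trans (hbr a y' h h2.symm ha hy') (ih w'' hlen'' hy' hb ?_)
          intro z hzsupp hzS
          exact hsupp z (by simp [hzsupp]) hzS
      · have hlen' : w'.length ≤ n := by simp [Walk.length_cons] at hlen; omega
        refine AR.trans (AR.of_adj h ha hy) (ih w' hlen' hy hb ?_)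
        intro z hzsupp hzS
        exact hsupp z (by simp [hzsupp]) hzS

section Expand

variable {k : ℕ} {V : Fin k → Type u} {G : SimpleGraph (Fin k)} {M : ∀ i, SimpleGraph (V i)}

lemma expand_adj_same {i : Fin k} {x y : V i} :
    (expandG G M).Adj ⟨i, x⟩ ⟨i, y⟩ ↔ (M i).Adj x y := by
  rw [expandG, fromRel_adj]
  constructor
  · rintro ⟨hne, (⟨h, hadj⟩ | ⟨h, _⟩) | (⟨h, hadj⟩ | ⟨h, _⟩)⟩
    · exact hadj
    · exact absurd rfl h
    · exact hadj.symm
    · exact absurd rfl h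
  · intro h
    refine ⟨by simp [h.ne], Or.inl (Or.inl ⟨rfl, h⟩)⟩

lemma expand_adj_cross {a b : Σ j, V j} (hne : a.1 ≠ b.1) :
    (expandG G M).Adj a b ↔ G.Adj a.1 b.1 := by
  rw [expandG, fromRel_adj]
  constructor
  · rintro ⟨_, (⟨h, _⟩ | ⟨_, h⟩) | (⟨h, _⟩ | ⟨_, h⟩)⟩
    · exact absurd h hne
    · exact h
    · exact absurd h.symm hne
    · exact h.symm
  · intro h
    exact ⟨fun he => hne (congrArg Sigma.fst he), Or.inl (Or.inr ⟨hne, h⟩)⟩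

lemma module_adj {i : Fin k} {a : Σ j, V j} (ha : a.1 ≠ i) (hG : G.Adj a.1 i)
    {b : Σ j, V j} (hb : b.1 = i) : (expandG G M).Adj a b :=
  (expand_adj_cross (by rw [hb]; exact ha)).2 (by rw [hb]; exact hG)

/-- A walk avoiding a superset of the module boundary and starting in the module
stays in the module. -/
lemma confine {i : Fin k} {Q : Set (Σ j, V j)}
    (hQ : setNbhd (expandG G M) (modSet i) ⊆ Q) :
    ∀ {a b : Σ j, V j} (w : (expandG G M).Walk a b), a ∈ modSet i →
      (∀ z ∈ w.support, z ∉ Q) → ∀ z ∈ w.support, z ∈ modSet i := by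
  intro a b w
  induction w with
  | nil => intro ha _ z hz; simp at hz; subst hz; exact ha
  | @cons a y b h w ih =>
    intro ha hsupp z hz
    have hy : y ∈ modSet i := by
      by_contra hy
      have : y ∈ setNbhd (expandG G M) (modSet i) := ⟨hy, a, ha, h.symm⟩
      exact hsupp y (by simp) (hQ this)
    rcases (by simpa using hz : z = a ∨ z ∈ w.support) with rfl | hz'
    · exact ha
    · exact ih hy (fun t ht => hsupp t (by simp [ht])) z hz'

/-- Lifting a module walk to the expanded graph. -/
lemma lift_walk {i : Fin k} {S : Set (Σ j, V j)} :
    ∀ {x y : V i} (ω : (M i).Walk x y), (∀ t ∈ ω.support, (⟨i, t⟩ : Σ j, V j) ∉ S) →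
      AvoidReach (expandG G M) S ⟨i, x⟩ ⟨i, y⟩ := by
  intro x y ω
  induction ω with
  | nil => intro hsupp; exact AR.refl _ (hsupp _ (by simp))
  | @cons x c y h ω ih =>
    intro hsupp
    exact AR.trans (AR.of_adj (expand_adj_same.2 h) (hsupp _ (by simp)) (hsupp _ (by simp)))
      (ih fun t ht => hsupp t (by simp [ht]))

/-- Projecting a walk confined to the module down to the module graph. -/
lemma project_walk {i : Fin k} {T : Set (V i)} {S' : Set (Σ j, V j)}
    (hT : ∀ t, t ∈ T → (⟨i, t⟩ : Σ j, V j) ∈ S') :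
    ∀ {a b : Σ j, V j} (w : (expandG G M).Walk a b),
      (∀ z ∈ w.support, z ∈ modSet i) → (∀ z ∈ w.support, z ∉ S') →
      ∀ (x y : V i), a = ⟨i, x⟩ → b = ⟨i, y⟩ → AvoidReach (M i) T x y := by
  intro a b w
  induction w with
  | nil =>
    intro _ hS' x y hax hby
    subst hax
    obtain rfl : x = y := by simpa using hby
    exact AR.refl _ (fun hxT => hS' _ (by simp) (hT x hxT))
  | @cons a c b h w ih =>
    intro hmod hS' x y hax hby
    obtain ⟨j, c2⟩ := c
    have hj : i = j := (hmod ⟨j, c2⟩ (by simp)).symm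
    subst hj
    subst hax
    have hadj : (M i).Adj x c2 := expand_adj_same.1 h
    have hxT : x ∉ T := fun hxT => hS' _ (by simp) (hT x hxT)
    have hc2T : c2 ∉ T := fun hcT => hS' ⟨i, c2⟩ (by simp) (hT c2 hcT)
    exact AR.trans (AR.of_adj hadj hxT hc2T)
      (ih (fun z hz => hmod z (by simp [hz])) (fun z hz => hS' z (by simp [hz])) c2 y rfl hby)

end Expand

theorem statement_8 {k : ℕ} {V : Fin k → Type} [∀ i, Fintype (V i)]
    (G : SimpleGraph (Fin k)) (M : ∀ i, SimpleGraph (V i))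
    (S : Set (Σ i, V i)) (hS : IsMinimalSeparator (expandG G M) S)
    (i : Fin k) (hint : (S ∩ modSet i).Nonempty) (hnsub : ¬ modSet i ⊆ S) :
    (∀ C, IsFullCompOf (expandG G M) S C → (C ∩ modSet i).Nonempty) ∧
      IsMinimalSeparator (M i) (Sigma.mk i ⁻¹' S) ∧
      S \ modSet i = setNbhd (expandG G M) (modSet i) := by
  classical
  obtain ⟨u, v, ⟨⟨huS, hvS, hsep⟩, hmin⟩⟩ := hS
  obtain ⟨s0, hs0S, hs0i⟩ := hint
  obtain ⟨p, hpi, hpS⟩ := Set.not_subset.1 hnsub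
  set H := expandG G M with hHdef
  -- Step A: the outside neighbourhood of the module is contained in S
  have hN : setNbhd H (modSet i) ⊆ S := by
    intro x hx
    obtain ⟨hxmod, a, hamod, hadj⟩ := hx
    by_contra hxS
    have hxne : x.1 ≠ i := hxmod
    have hGxi : G.Adj x.1 i := by
      have h1 : x.1 ≠ a.1 := by rw [hamod]; exact hxne
      have h2 := (expand_adj_cross h1).1 hadj
      rwa [hamod] at h2
    have hx_all : ∀ b : Σ j, V j, b ∈ modSet i → H.Adj x b :=
      fun b hb => module_adj hxne hGxi hb
    have hbr : ∀ c d, H.Adj c s0 → H.Adj d s0 → c ∉ S → d ∉ S → AvoidReach H S c d := by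
      have key : ∀ e, H.Adj e s0 → e ∉ S → AvoidReach H S e p := by
        intro e he heS
        by_cases hei : e ∈ modSet i
        · exact AR.trans (AR.of_adj (hx_all e hei).symm heS hxS)
            (AR.of_adj (hx_all p hpi) hxS hpS)
        · have hene : e.1 ≠ i := hei
          have h1 : e.1 ≠ s0.1 := by rw [hs0i]; exact hene
          have hG2 : G.Adj e.1 i := by
            have h2 := (expand_adj_cross h1).1 he
            rwa [hs0i] at h2
          exact AR.of_adj (module_adj hene hG2 hpi) heS hpS
      intro c d hc hd hcS hdS
      exact AR.trans (key c hc hcS) (AR.symm (key d hd hdS))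
    have hssub : S \ {s0} ⊂ S := ⟨Set.diff_subset, fun hsub => (hsub hs0S).2 rfl⟩
    have hne := hmin _ hssub
    rw [IsSep] at hne; push_neg at hne
    obtain ⟨w0, hw0⟩ := hne (fun h => huS h.1) (fun h => hvS h.1)
    exact hsep (AR.purge s0 hbr w0.length w0 le_rfl huS hvS
      (fun z hz hzS => by by_contra hzs0; exact hw0 z hz ⟨hzS, by simpa using hzs0⟩))
  -- Construct a_u (called c) and a_v (called d): module vertices in the components of u, v
  have hssub0 : S \ {s0} ⊂ S := ⟨Set.diff_subset, fun hsub => (hsub hs0S).2 rfl⟩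
  have hne0 := hmin _ hssub0
  rw [IsSep] at hne0; push_neg at hne0
  obtain ⟨w0, hw0⟩ := hne0 (fun h => huS h.1) (fun h => hvS h.1)
  have hhit : ∃ z ∈ w0.support, z ∈ S := by
    by_contra h; push_neg at h; exact hsep ⟨w0, h⟩
  obtain ⟨c, s, hARc, hsS, hssupp, hadjc⟩ := AR.boundary w0 huS hhit
  have hss0 : s = s0 := by
    by_contra h; exact hw0 s hssupp ⟨hsS, by simpa using h⟩
  rw [hss0] at hadjc
  have hcS : c ∉ S := AR.right hARc
  have hci : c ∈ modSet i := by
    by_contra hc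
    exact hcS (hN ⟨hc, s0, hs0i, hadjc⟩)
  obtain ⟨d, s', hARd, hs'S, hs'supp, hadjd⟩ := AR.boundary w0.reverse hvS (by simpa using hhit)
  have hs'0 : s' = s0 := by
    by_contra h
    exact hw0 s' (by simpa using hs'supp) ⟨hs'S, by simpa using h⟩
  rw [hs'0] at hadjd
  have hdS : d ∉ S := AR.right hARd
  have hdi : d ∈ modSet i := by
    by_contra hd
    exact hdS (hN ⟨hd, s0, hs0i, hadjd⟩)
  -- Part 3
  have h3 : S \ modSet i = setNbhd H (modSet i) := by
    apply Set.Subset.antisymm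
    · rintro x ⟨hxS, hxmod⟩
      have hssubx : S \ {x} ⊂ S := ⟨Set.diff_subset, fun hsub => (hsub hxS).2 rfl⟩
      have hnex := hmin _ hssubx
      rw [IsSep] at hnex; push_neg at hnex
      obtain ⟨wx, hwx⟩ := hnex (fun h => huS h.1) (fun h => hvS h.1)
      have hhitx : ∃ z ∈ wx.support, z ∈ S := by
        by_contra h; push_neg at h; exact hsep ⟨wx, h⟩
      obtain ⟨c', s', hARc', hs'S, hs'supp, hadj'⟩ := AR.boundary wx huS hhitx
      have hs'x : s' = x := by
        by_contra h; exact hwx s' hs'supp ⟨hs'S, by simpa using h⟩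
      subst hs'x
      obtain ⟨wcc, hwcc⟩ := AR.trans (AR.symm hARc) hARc'
      have hc'i : c' ∈ modSet i := confine hN wcc hci hwcc c' wcc.end_mem_support
      exact ⟨hxmod, c', hc'i, hadj'.symm⟩
    · intro x hx
      exact ⟨hN hx, hx.1⟩
  refine ⟨?_, ?_, h3⟩
  -- Part 1
  · rintro C ⟨⟨v0, hv0S, rfl⟩, hfull⟩
    have hs0' : s0 ∈ setNbhd H {x | AvoidReach H S v0 x} := by rw [hfull]; exact hs0S
    obtain ⟨hs0C, e, heC, hadj⟩ := hs0'
    have heS : e ∉ S := AR.right heC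
    have hei : e ∈ modSet i := by
      by_contra he
      exact heS (hN ⟨he, s0, hs0i, hadj.symm⟩)
    exact ⟨e, heC, hei⟩
  -- Part 2
  · obtain ⟨jc, c2⟩ := c
    have hjc : i = jc := (hci : jc = i).symm
    subst hjc
    obtain ⟨jd, d2⟩ := d
    have hjd : i = jd := (hdi : jd = i).symm
    subst hjd
    refine ⟨c2, d2, ⟨hcS, hdS, ?_⟩, ?_⟩
    · -- S ∩ V i separates c2 and d2 in M i
      rintro ⟨ω, hω⟩
      have hlift : AvoidReach H S ⟨i, c2⟩ ⟨i, d2⟩ := lift_walk ω (fun t ht => hω t ht)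
      exact hsep (AR.trans hARc (AR.trans hlift (AR.symm hARd)))
    · -- minimality
      intro T hT hTsep
      obtain ⟨hc2T, hd2T, hTna⟩ := hTsep
      set S' : Set (Σ j, V j) := (S \ modSet i) ∪ (Sigma.mk i '' T) with hS'def
      have hS'sub : S' ⊆ S := by
        rintro z (⟨h1, _⟩ | ⟨t, htT, rfl⟩)
        · exact h1
        · exact hT.1 htT
      have hS'ssub : S' ⊂ S := by
        refine ⟨hS'sub, ?_⟩
        obtain ⟨t0, ht0S, ht0T⟩ := Set.exists_of_ssubset hT
        intro hsub
        rcases hsub ht0S with ⟨_, hmod⟩ | ⟨t, htT, heq⟩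
        · exact hmod rfl
        · obtain rfl : t = t0 := by simpa using heq
          exact ht0T htT
      have hne' := hmin S' hS'ssub
      rw [IsSep] at hne'; push_neg at hne'
      have hARuv : AvoidReach H S' u v :=
        hne' (fun h => huS (hS'sub h)) (fun h => hvS (hS'sub h))
      have hNS' : setNbhd H (modSet i) ⊆ S' := by
        intro z hz
        exact Or.inl ⟨hN hz, hz.1⟩
      obtain ⟨wcd, hwcd⟩ := AR.trans (AR.symm (AR.mono hS'sub hARc))
        (AR.trans hARuv (AR.mono hS'sub hARd))
      have hconf := confine hNS' wcd rfl hwcd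
      exact hTna (project_walk (fun t ht => Or.inr ⟨t, ht, rfl⟩) wcd hconf hwcd c2 d2 rfl rfl)
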